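/- Under the setup of the Λ-smooth exact Stiefel/polar update (W_{t+1} = W_t − α_t·U_t V_tᵀ with ∇L(W_t) = U_t·diag(σ_{t,1},…,σ_{t,d})·V_tᵀ, σ_{t,i} ≥ 0, U_tᵀU_t = V_tᵀV_t = I_d, α_t > 0), assume additionally that L is bounded below by L_* = inf_W L(W) > −∞. Then for every T ≥ 1: min_{0≤t≤T−1} Σ_{i=1}^d σ_{t,i} ≤ (L(W_0) − L_*)/(Σ_{t=0}^{T−1} α_t) + (Λ/2)·d·(Σ_{t=0}^{T−1} α_t²)/(Σ_{t=0}^{T−1} α_t). -/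

import Mathlib

open Matrix

/-- Stationarity bound for the exact Stiefel/polar update with varying step sizes:
under `Λ`-smoothness and boundedness below (`Lstar = inf L`), for every `T ≥ 1`,
`min_{0 ≤ t ≤ T-1} ∑ i, σv t i ≤ (L (W 0) - Lstar) / (∑_{t<T} a t)
  + (Λ/2) * d * (∑_{t<T} (a t)^2) / (∑_{t<T} a t)`. -/
theorem muon_stationarity_bound (d₁ d₂ : ℕ) (h1 : 1 ≤ d₁) (h2 : 1 ≤ d₂) (Λ : ℝ)
    (L : Matrix (Fin d₁) (Fin d₂) ℝ → ℝ)
    (G : Matrix (Fin d₁) (Fin d₂) ℝ → Matrix (Fin d₁) (Fin d₂) ℝ)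
    (hsmooth : ∀ X Y, L Y ≤ L X + Matrix.trace ((G X)ᵀ * (Y - X))
      + Λ / 2 * Matrix.trace ((Y - X)ᵀ * (Y - X)))
    (Lstar : ℝ) (hLstarLB : ∀ X, Lstar ≤ L X) (hLstarInf : Lstar = ⨅ X, L X)
    (W : ℕ → Matrix (Fin d₁) (Fin d₂) ℝ)
    (a : ℕ → ℝ) (ha : ∀ t, 0 < a t)
    (U : ℕ → Matrix (Fin d₁) (Fin (min d₁ d₂)) ℝ)
    (V : ℕ → Matrix (Fin d₂) (Fin (min d₁ d₂)) ℝ)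
    (σv : ℕ → Fin (min d₁ d₂) → ℝ) (hσ : ∀ t i, 0 ≤ σv t i)
    (hU : ∀ t, (U t)ᵀ * U t = 1) (hV : ∀ t, (V t)ᵀ * V t = 1)
    (hG : ∀ t, G (W t) = U t * Matrix.diagonal (σv t) * (V t)ᵀ)
    (hupd : ∀ t, W (t + 1) = W t - a t • (U t * (V t)ᵀ))
    (T : ℕ) (hT : 1 ≤ T) :
    (Finset.range T).inf' (Finset.nonempty_range_iff.mpr (by omega))
        (fun t => ∑ i, σv t i)
      ≤ (L (W 0) - Lstar) / (∑ t ∈ Finset.range T, a t)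
        + Λ / 2 * (min d₁ d₂ : ℝ) *
          (∑ t ∈ Finset.range T, (a t) ^ 2) / (∑ t ∈ Finset.range T, a t) := by
  set dd : ℝ := (min d₁ d₂ : ℝ) with hdd
  -- per-step descent
  have step : ∀ t, L (W (t+1)) ≤ L (W t) - a t * (∑ i, σv t i)
      + Λ / 2 * ((a t)^2 * dd) := by
    intro t
    have h := hsmooth (W t) (W (t+1))
    have hdiff : W (t+1) - W t = (-(a t)) • (U t * (V t)ᵀ) := by
      rw [hupd t, neg_smul]; abel
    have e1 : (G (W t))ᵀ * (U t * (V t)ᵀ)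
        = V t * (Matrix.diagonal (σv t) * (V t)ᵀ) := by
      rw [hG t]
      rw [Matrix.transpose_mul, Matrix.transpose_mul, Matrix.diagonal_transpose]
      rw [Matrix.mul_assoc, Matrix.mul_assoc, ← Matrix.mul_assoc (U t)ᵀ, hU t,
        Matrix.one_mul]
      rw [Matrix.transpose_transpose]
    have tr1 : Matrix.trace ((G (W t))ᵀ * (W (t+1) - W t))
        = -(a t) * (∑ i, σv t i) := by
      rw [hdiff, Matrix.mul_smul, Matrix.trace_smul, e1, Matrix.trace_mul_comm,
        Matrix.mul_assoc, hV t, Matrix.mul_one, Matrix.trace_diagonal]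
      simp
    have e2 : (U t * (V t)ᵀ)ᵀ * (U t * (V t)ᵀ) = V t * (V t)ᵀ := by
      rw [Matrix.transpose_mul, Matrix.transpose_transpose, Matrix.mul_assoc,
        ← Matrix.mul_assoc (U t)ᵀ, hU t, Matrix.one_mul]
    have tr2 : Matrix.trace ((W (t+1) - W t)ᵀ * (W (t+1) - W t))
        = (a t)^2 * dd := by
      rw [hdiff, Matrix.transpose_smul, Matrix.smul_mul, Matrix.mul_smul,
        Matrix.trace_smul, Matrix.trace_smul, e2, Matrix.trace_mul_comm, hV t,
        Matrix.trace_one]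
      simp [hdd]
      ring
    rw [tr1, tr2] at h
    linarith
  -- telescoping
  have tele : ∑ t ∈ Finset.range T, (L (W (t+1)) - L (W t))
      = L (W T) - L (W 0) := Finset.sum_range_sub (fun t => L (W t)) T
  have sumle : ∑ t ∈ Finset.range T, (a t * (∑ i, σv t i))
      ≤ L (W 0) - Lstar + Λ / 2 * dd * ∑ t ∈ Finset.range T, (a t)^2 := by
    have h1 : ∑ t ∈ Finset.range T, (L (W (t+1)) - L (W t))
        ≤ ∑ t ∈ Finset.range T,
          (-(a t * (∑ i, σv t i)) + Λ / 2 * ((a t)^2 * dd)) := by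
      apply Finset.sum_le_sum
      intro t _
      have := step t
      linarith
    rw [tele, Finset.sum_add_distrib, Finset.sum_neg_distrib, ← Finset.mul_sum] at h1
    have hbd := hLstarLB (W T)
    have h2 : Λ / 2 * ∑ i ∈ Finset.range T, (a i)^2 * dd
        = Λ / 2 * dd * ∑ t ∈ Finset.range T, (a t)^2 := by
      rw [← Finset.sum_mul]; ring
    rw [h2] at h1
    linarith
  -- minimum bound
  set m := (Finset.range T).inf' (Finset.nonempty_range_iff.mpr (by omega))
      (fun t => ∑ i, σv t i) with hm
  have hA : 0 < ∑ t ∈ Finset.range T, a t :=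
    Finset.sum_pos (fun t _ => ha t) (Finset.nonempty_range_iff.mpr (by omega))
  have hmin : m * ∑ t ∈ Finset.range T, a t
      ≤ ∑ t ∈ Finset.range T, (a t * (∑ i, σv t i)) := by
    rw [Finset.mul_sum]
    apply Finset.sum_le_sum
    intro t ht
    have hle : m ≤ ∑ i, σv t i := Finset.inf'_le _ ht
    have := (ha t).le
    nlinarith
  rw [← add_div, le_div_iff₀ hA]
  calc m * ∑ t ∈ Finset.range T, a t
      ≤ ∑ t ∈ Finset.range T, (a t * (∑ i, σv t i)) := hmin
    _ ≤ L (W 0) - Lstar + Λ / 2 * dd * ∑ t ∈ Finset.range T, (a t)^2 := sumle
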